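/- arXiv:1803.08975 — 5 statements merged into one kernel-verified Lean document; each statement's English description precedes it below -/
import Mathlib

section
/- For all x, y ∈ X^u(P): x ∼_s y if and only if there exists k ∈ ℕ such that g^k(x_0) = g^k(y_0). -/
open Filter Topology

variable {Y : Type*} [MetricSpace Y]

/-- The inverse limit (solenoid) space of a map `g : Y → Y`. -/
abbrev Solenoid (g : Y → Y) : Type _ := {x : ℕ → Y // ∀ n, g (x (n + 1)) = x n}

namespace Solenoid

variable {g : Y → Y}

/-- The map `φ(x₀, x₁, …) = (g x₀, x₀, x₁, …)`. -/
def phi (x : Solenoid g) : Solenoid g :=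
  ⟨fun n => Nat.casesOn n (g (x.1 0)) fun k => x.1 k, by
    intro n
    cases n with
    | zero => rfl
    | succ k => exact x.2 k⟩

/-- The left shift, the inverse of `phi`. -/
def shift (x : Solenoid g) : Solenoid g :=
  ⟨fun n => x.1 (n + 1), fun n => x.2 (n + 1)⟩

/-- `d'_X(x, y) = sup_n γ^n d_Y(x_n, y_n)`. -/
noncomputable def dX' (γ : ℝ) (x y : Solenoid g) : ℝ :=
  ⨆ n : ℕ, γ ^ n * dist (x.1 n) (y.1 n)

/-- `d_X(x, y) = Σ_{i=0}^{K} γ^i d'_X(φ^i x, φ^i y)`. -/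
noncomputable def dX (γ : ℝ) (K : ℕ) (x y : Solenoid g) : ℝ :=
  ∑ i ∈ Finset.range (K + 1), γ ^ i * dX' γ (phi^[i] x) (phi^[i] y)

/-- The local unstable set `X^u(x, ε)`. -/
def locUnstable (γ : ℝ) (K : ℕ) (x : Solenoid g) (ε : ℝ) : Set (Solenoid g) :=
  {y | (∀ n, dist (x.1 n) (y.1 n) < ε) ∧ dX γ K x y ≤ ε}

/-- Stable equivalence `x ∼ₛ y`. -/
def stableEquiv (γ : ℝ) (K : ℕ) (x y : Solenoid g) : Prop :=
  Tendsto (fun n => dX γ K (phi^[n] x) (phi^[n] y)) atTop (𝓝 0)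

/-- Unstable equivalence `x ∼ᵤ y`. -/
def unstableEquiv (γ : ℝ) (K : ℕ) (x y : Solenoid g) : Prop :=
  Tendsto (fun n => dX γ K (shift^[n] x) (shift^[n] y)) atTop (𝓝 0)

/-- `X^u(P)`, the union of the unstable equivalence classes of points of `P`. -/
def XuP (γ : ℝ) (K : ℕ) (P : Set (Solenoid g)) : Set (Solenoid g) :=
  {x | ∃ p ∈ P, unstableEquiv γ K x p}

/-- The relation `x ∼₀ y`. -/
def equiv0 (γ : ℝ) (K : ℕ) (εY : ℝ) (x y : Solenoid g) : Prop :=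
  x.1 0 = y.1 0 ∧
    ∃ δ, 0 < δ ∧ δ < εY ∧
      ∃ U ⊆ locUnstable γ K y εY,
        (∃ V : Set (Solenoid g), IsOpen V ∧ U = V ∩ locUnstable γ K y εY) ∧
        (fun z : Solenoid g => z.1 0) '' locUnstable γ K x δ
          = (fun z : Solenoid g => z.1 0) '' U

end Solenoid

section Aux

open Solenoid

variable {Y : Type*} [MetricSpace Y] {g : Y → Y}

lemma solenoid_iterate_coord_le (x : Solenoid g) :
    ∀ n m : ℕ, m ≤ n → (phi^[n] x).1 m = g^[n - m] (x.1 0) := by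
  intro n
  induction n with
  | zero =>
    intro m hm
    interval_cases m
    simp
  | succ n ih =>
    intro m hm
    rw [Function.iterate_succ_apply']
    cases m with
    | zero =>
      show g ((phi^[n] x).1 0) = g^[n + 1 - 0] (x.1 0)
      rw [ih 0 (Nat.zero_le _), Nat.sub_zero, Nat.sub_zero,
        ← Function.iterate_succ_apply' g]
    | succ m =>
      show (phi^[n] x).1 m = g^[n + 1 - (m + 1)] (x.1 0)
      rw [ih m (Nat.succ_le_succ_iff.mp hm), Nat.succ_sub_succ]

lemma solenoid_iterate_coord_ge (x : Solenoid g) :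
    ∀ n m : ℕ, n ≤ m → (phi^[n] x).1 m = x.1 (m - n) := by
  intro n
  induction n with
  | zero => intro m _; simp
  | succ n ih =>
    intro m hm
    rw [Function.iterate_succ_apply']
    cases m with
    | zero => omega
    | succ m =>
      show (phi^[n] x).1 m = x.1 (m + 1 - (n + 1))
      rw [ih m (Nat.succ_le_succ_iff.mp hm), Nat.succ_sub_succ]

lemma solenoid_dX'_nonneg {γ : ℝ} (hγ : 0 ≤ γ) (x y : Solenoid g) :
    0 ≤ dX' γ x y :=
  Real.iSup_nonneg fun n => mul_nonneg (pow_nonneg hγ n) dist_nonneg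

lemma solenoid_dX_nonneg {γ : ℝ} (hγ : 0 ≤ γ) (K : ℕ) (x y : Solenoid g) :
    0 ≤ dX γ K x y :=
  Finset.sum_nonneg fun i _ =>
    mul_nonneg (pow_nonneg hγ i) (solenoid_dX'_nonneg hγ _ _)

lemma solenoid_dX'_le {γ C : ℝ} (x y : Solenoid g)
    (hb : ∀ n, γ ^ n * dist (x.1 n) (y.1 n) ≤ C) : dX' γ x y ≤ C :=
  ciSup_le hb

lemma solenoid_le_dX' {γ C : ℝ} (x y : Solenoid g)
    (hb : ∀ n, γ ^ n * dist (x.1 n) (y.1 n) ≤ C) (n : ℕ) :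
    γ ^ n * dist (x.1 n) (y.1 n) ≤ dX' γ x y :=
  le_ciSup (f := fun n => γ ^ n * dist (x.1 n) (y.1 n))
    ⟨C, by rintro z ⟨n, rfl⟩; exact hb n⟩ n

lemma solenoid_dist_le_dX {γ C : ℝ} (hγ0 : 0 < γ) (hγ1 : γ < 1) (K : ℕ)
    (x y : Solenoid g) (hC : ∀ a b : Y, dist a b ≤ C) :
    dist (x.1 0) (y.1 0) ≤ dX γ K x y := by
  have hb : ∀ n, γ ^ n * dist (x.1 n) (y.1 n) ≤ C := fun n =>
    le_trans (mul_le_of_le_one_left dist_nonneg (pow_le_one₀ hγ0.le hγ1.le)) (hC _ _)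
  have h0 : dist (x.1 0) (y.1 0) ≤ dX' γ x y := by
    have := solenoid_le_dX' x y hb 0
    simpa using this
  calc dist (x.1 0) (y.1 0) ≤ γ ^ 0 * dX' γ (phi^[0] x) (phi^[0] y) := by simpa using h0
    _ ≤ dX γ K x y := by
        apply Finset.single_le_sum (f := fun i => γ ^ i * dX' γ (phi^[i] x) (phi^[i] y))
          (fun i _ => mul_nonneg (pow_nonneg hγ0.le i) (solenoid_dX'_nonneg hγ0.le _ _))
        simp

end Aux

theorem stable_iff_eventually_equal
    {Y : Type*} [MetricSpace Y] [CompactSpace Y]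
    (g : Y → Y) (hgc : Continuous g) (hgs : Function.Surjective g)
    (β γ : ℝ) (K : ℕ) (hβ : 0 < β) (hK : 1 ≤ K) (hγ0 : 0 < γ) (hγ1 : γ < 1)
    (hax1 : ∀ x y : Y, dist x y ≤ β →
      dist (g^[K] x) (g^[K] y) ≤ γ ^ K * dist (g^[2 * K] x) (g^[2 * K] y))
    (hax2 : ∀ (x : Y) (ε : ℝ), 0 < ε → ε ≤ β →
      g^[K] '' Metric.ball (g^[K] x) ε ⊆ g^[2 * K] '' Metric.ball x (γ * ε))
    (P : Set (Solenoid g)) (hPfin : P.Finite) (hPinv : Solenoid.phi '' P = P)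
    (x : Solenoid g) (hx : x ∈ Solenoid.XuP γ K P)
    (y : Solenoid g) (hy : y ∈ Solenoid.XuP γ K P) :
    Solenoid.stableEquiv γ K x y ↔ ∃ k : ℕ, g^[k] (x.1 0) = g^[k] (y.1 0) := by

  obtain ⟨C, hCb⟩ := Metric.isBounded_iff.mp (isCompact_univ (X := Y)).isBounded
  have hC : ∀ a b : Y, dist a b ≤ C := fun a b => hCb (Set.mem_univ a) (Set.mem_univ b)
  have hC0 : (0 : ℝ) ≤ C := le_trans dist_nonneg (hC (x.1 0) (x.1 0))
  have hcoord0 : ∀ (z : Solenoid g) (n : ℕ), (Solenoid.phi^[n] z).1 0 = g^[n] (z.1 0) := by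
    intro z n; simpa using solenoid_iterate_coord_le z n 0 (Nat.zero_le n)
  constructor
  · intro hst
    have hdist : Tendsto (fun n => dist (g^[n] (x.1 0)) (g^[n] (y.1 0))) atTop (𝓝 0) := by
      apply squeeze_zero (fun n => dist_nonneg)
        (g := fun n => Solenoid.dX γ K (Solenoid.phi^[n] x) (Solenoid.phi^[n] y)) _ hst
      intro n
      have h := solenoid_dist_le_dX hγ0 hγ1 K (Solenoid.phi^[n] x) (Solenoid.phi^[n] y) hC
      rwa [hcoord0 x n, hcoord0 y n] at h
    obtain ⟨N, hNle⟩ := eventually_atTop.mp (hdist.eventually (gt_mem_nhds hβ))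
    set A : ℕ → ℝ := fun m => dist (g^[m] (x.1 0)) (g^[m] (y.1 0)) with hA
    have hrec : ∀ m, N ≤ m → A (m + K) ≤ γ ^ K * A (m + 2 * K) := by
      intro m hm
      have h1 := hax1 (g^[m] (x.1 0)) (g^[m] (y.1 0)) ((hNle m hm).le)
      have e : ∀ (j : ℕ) (z : Y), g^[j] (g^[m] z) = g^[m + j] z := by
        intro j z
        rw [← Function.iterate_add_apply, Nat.add_comm]
      rwa [e K, e K, e (2 * K), e (2 * K)] at h1
    have key : ∀ j, A (N + K) ≤ (γ ^ K) ^ j * A (N + K + j * K) := by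
      intro j
      induction j with
      | zero => simp
      | succ j ih =>
        have h2 := hrec (N + j * K) (Nat.le_add_right _ _)
        have e1 : N + j * K + K = N + K + j * K := by ring
        have e2 : N + j * K + 2 * K = N + K + (j + 1) * K := by ring
        rw [e1, e2] at h2
        calc A (N + K) ≤ (γ ^ K) ^ j * A (N + K + j * K) := ih
          _ ≤ (γ ^ K) ^ j * (γ ^ K * A (N + K + (j + 1) * K)) :=
              mul_le_mul_of_nonneg_left h2 (pow_nonneg (pow_nonneg hγ0.le K) j)
          _ = (γ ^ K) ^ (j + 1) * A (N + K + (j + 1) * K) := by ring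
    have hle0 : A (N + K) ≤ 0 := by
      have htt : Tendsto (fun j : ℕ => (γ ^ K) ^ j * C) atTop (𝓝 0) := by
        have h3 := (tendsto_pow_atTop_nhds_zero_of_lt_one (pow_nonneg hγ0.le K)
          (pow_lt_one₀ hγ0.le hγ1 (by omega))).mul_const C
        simpa using h3
      exact ge_of_tendsto' htt (fun j => (key j).trans
        (mul_le_mul_of_nonneg_left (hC _ _) (pow_nonneg (pow_nonneg hγ0.le K) j)))
    exact ⟨N + K, dist_le_zero.mp hle0⟩
  · rintro ⟨k, hk⟩
    have hbound : ∀ n, k ≤ n →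
        Solenoid.dX γ K (Solenoid.phi^[n] x) (Solenoid.phi^[n] y)
          ≤ (K + 1 : ℝ) * C * γ ^ (n - k) := by
      intro n hn
      have hdX' : ∀ i : ℕ, Solenoid.dX' γ (Solenoid.phi^[n + i] x) (Solenoid.phi^[n + i] y)
          ≤ C * γ ^ (n - k) := by
        intro i
        apply solenoid_dX'_le
        intro m
        by_cases hm : m + k ≤ n + i
        · have hx1 : (Solenoid.phi^[n + i] x).1 m = g^[n + i - m] (x.1 0) :=
            solenoid_iterate_coord_le x (n + i) m (by omega)
          have hy1 : (Solenoid.phi^[n + i] y).1 m = g^[n + i - m] (y.1 0) :=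
            solenoid_iterate_coord_le y (n + i) m (by omega)
          have heq : g^[n + i - m] (x.1 0) = g^[n + i - m] (y.1 0) := by
            have e : n + i - m = (n + i - m - k) + k := by omega
            rw [e, Function.iterate_add_apply, Function.iterate_add_apply, hk]
          rw [hx1, hy1, heq, dist_self, mul_zero]
          exact mul_nonneg hC0 (pow_nonneg hγ0.le _)
        · have h1 : γ ^ m * dist ((Solenoid.phi^[n + i] x).1 m) ((Solenoid.phi^[n + i] y).1 m)
              ≤ γ ^ m * C := mul_le_mul_of_nonneg_left (hC _ _) (pow_nonneg hγ0.le m)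
          have h2 : γ ^ m ≤ γ ^ (n - k) := pow_le_pow_of_le_one hγ0.le hγ1.le (by omega)
          calc γ ^ m * dist ((Solenoid.phi^[n + i] x).1 m) ((Solenoid.phi^[n + i] y).1 m)
              ≤ γ ^ m * C := h1
            _ ≤ γ ^ (n - k) * C := mul_le_mul_of_nonneg_right h2 hC0
            _ = C * γ ^ (n - k) := by ring
      rw [Solenoid.dX]
      refine le_trans (Finset.sum_le_card_nsmul _ _ (C * γ ^ (n - k)) ?_) ?_
      · intro i _
        have e : ∀ z : Solenoid g,
            Solenoid.phi^[i] (Solenoid.phi^[n] z) = Solenoid.phi^[n + i] z := by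
          intro z; rw [← Function.iterate_add_apply, Nat.add_comm]
        rw [e, e]
        calc γ ^ i * Solenoid.dX' γ (Solenoid.phi^[n + i] x) (Solenoid.phi^[n + i] y)
            ≤ 1 * (C * γ ^ (n - k)) :=
              mul_le_mul (pow_le_one₀ hγ0.le hγ1.le) (hdX' i)
                (solenoid_dX'_nonneg hγ0.le _ _) zero_le_one
          _ = C * γ ^ (n - k) := one_mul _
      · simp only [Finset.card_range, nsmul_eq_mul]
        exact le_of_eq (by push_cast; ring)
    have htt : Tendsto (fun n : ℕ => (K + 1 : ℝ) * C * γ ^ (n - k)) atTop (𝓝 0) := by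
      have h1 : Tendsto (fun n : ℕ => γ ^ (n - k)) atTop (𝓝 0) :=
        (tendsto_pow_atTop_nhds_zero_of_lt_one hγ0.le hγ1).comp (tendsto_sub_atTop_nat k)
      simpa using h1.const_mul ((K + 1 : ℝ) * C)
    exact squeeze_zero' (Eventually.of_forall fun n => solenoid_dX_nonneg hγ0.le K _ _)
      (eventually_atTop.mpr ⟨k, hbound⟩) htt
end

section
/- For every compact subset K ⊆ X there exists N ∈ ℕ such that for every x ∈ X, the set {x' ∈ K : q(x') = q(x)} has at most N elements. -/
theorem bounded_fibers_on_compact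
    {X : Type*} [TopologicalSpace X] [SecondCountableTopology X]
    [LocallyCompactSpace X] [T2Space X]
    {Y : Type*} [TopologicalSpace Y]
    (q : X → Y) (hq_surj : Function.Surjective q)
    (hq_loc : ∀ x : X, ∃ U : Set X, x ∈ U ∧ IsOpen U ∧ IsOpen (q '' U) ∧
      ∃ h : U ≃ₜ (q '' U), ∀ u : U, (h u : Y) = q u)
    (K : Set X) (hK : IsCompact K) :
    ∃ N : ℕ, ∀ x : X,
      {x' : X | x' ∈ K ∧ q x' = q x}.Finite ∧
      {x' : X | x' ∈ K ∧ q x' = q x}.ncard ≤ N := by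
  choose U hmem hopen _hopenim h hcomm using hq_loc
  -- q is injective on each U i
  have hinj : ∀ i : X, ∀ a ∈ U i, ∀ b ∈ U i, q a = q b → a = b := by
    intro i a ha b hb hab
    have : (h i) ⟨a, ha⟩ = (h i) ⟨b, hb⟩ := by
      apply Subtype.ext
      rw [hcomm i ⟨a, ha⟩, hcomm i ⟨b, hb⟩]
      exact hab
    simpa using (h i).injective this
  obtain ⟨t, ht⟩ := hK.elim_finite_subcover U hopen
    (fun x hx => Set.mem_iUnion.2 ⟨x, hmem x⟩)
  refine ⟨t.card, fun x => ?_⟩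
  set S := {x' : X | x' ∈ K ∧ q x' = q x} with hS
  have hchoice : ∀ s : S, ∃ i ∈ t, (s : X) ∈ U i := by
    intro s
    have := ht s.2.1
    simpa using Set.mem_iUnion₂.1 this
  choose f hf hfU using hchoice
  have hfinj : Function.Injective (fun s : S => (⟨f s, hf s⟩ : t)) := by
    intro a b hab
    apply Subtype.ext
    have hi : f a = f b := congrArg Subtype.val hab
    refine hinj (f a) a (hfU a) b (by rw [hi]; exact hfU b) ?_
    rw [a.2.2, b.2.2]
  have : Finite S := Finite.of_injective _ hfinj
  refine ⟨Set.toFinite S, ?_⟩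
  have h1 : S.ncard = Nat.card S := (Nat.card_coe_set_eq S).symm
  have h2 : Nat.card S ≤ Nat.card t := Nat.card_le_card_of_injective _ hfinj
  have h3 : Nat.card t = t.card := by simp [Nat.card_eq_fintype_card]
  omega
end

section
/- For every compact subset K̂ ⊆ R(q) there exists M ∈ ℕ such that for every x ∈ X, the set {(x', x'') ∈ K̂ : q(x') = q(x)} has at most M elements. -/
theorem bounded_fibers_on_compact_in_Rq
    {X : Type*} [TopologicalSpace X] [SecondCountableTopology X]
    [LocallyCompactSpace X] [T2Space X]
    {Y : Type*} [TopologicalSpace Y]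
    (q : X → Y) (hq_surj : Function.Surjective q)
    (hq_loc : ∀ x : X, ∃ U : Set X, x ∈ U ∧ IsOpen U ∧ IsOpen (q '' U) ∧
      ∃ h : U ≃ₜ (q '' U), ∀ u : U, (h u : Y) = q u)
    (Khat : Set (X × X)) (hKhat_sub : Khat ⊆ {p : X × X | q p.1 = q p.2})
    (hKhat : IsCompact Khat) :
    ∃ M : ℕ, ∀ x : X,
      {p : X × X | p ∈ Khat ∧ q p.1 = q x}.Finite ∧
      {p : X × X | p ∈ Khat ∧ q p.1 = q x}.ncard ≤ M := by
  choose U hmemU hopenU _ hhomeo using hq_loc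
  have hInj : ∀ x : X, Set.InjOn q (U x) := by
    intro x a ha b hb hab
    obtain ⟨h, hh⟩ := hhomeo x
    have heq : h ⟨a, ha⟩ = h ⟨b, hb⟩ := by
      apply Subtype.ext
      rw [hh ⟨a, ha⟩, hh ⟨b, hb⟩]; exact hab
    exact congrArg Subtype.val (h.injective heq)
  set W : X × X → Set (X × X) := fun c => U c.1 ×ˢ U c.2 with hW
  have hWmem : ∀ c : X × X, c ∈ W c := fun c => ⟨hmemU c.1, hmemU c.2⟩
  have hWopen : ∀ c : X × X, IsOpen (W c) :=
    fun c => (hopenU c.1).prod (hopenU c.2)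
  obtain ⟨t, htK, hcov⟩ := hKhat.elim_nhds_subcover W
    (fun c _ => (hWopen c).mem_nhds (hWmem c))
  refine ⟨t.card, fun x => ?_⟩
  set S : Set (X × X) := {p : X × X | p ∈ Khat ∧ q p.1 = q x} with hS
  -- key: two points of S in the same box W c are equal
  have key : ∀ p ∈ S, ∀ p' ∈ S, ∀ c, p ∈ W c → p' ∈ W c → p = p' := by
    rintro p ⟨hpK, hpq⟩ p' ⟨hp'K, hp'q⟩ c ⟨hp1, hp2⟩ ⟨hp'1, hp'2⟩
    have h1 : p.1 = p'.1 := hInj c.1 hp1 hp'1 (by rw [hpq, hp'q])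
    have h2 : p.2 = p'.2 := by
      refine hInj c.2 hp2 hp'2 ?_
      have e1 : q p.1 = q p.2 := hKhat_sub hpK
      have e2 : q p'.1 = q p'.2 := hKhat_sub hp'K
      rw [← e1, ← e2, hpq, hp'q]
    exact Prod.ext h1 h2
  classical
  set f : X × X → X × X := fun p =>
    if h : ∃ c ∈ t, p ∈ W c then h.choose else p with hf
  have hfp : ∀ p ∈ S, f p ∈ t ∧ p ∈ W (f p) := by
    intro p hp
    have hpc : ∃ c ∈ t, p ∈ W c := by
      have := hcov hp.1
      simpa using this
    simp only [hf, dif_pos hpc]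
    exact ⟨hpc.choose_spec.1, hpc.choose_spec.2⟩
  have hmaps : ∀ p ∈ S, f p ∈ (t : Set (X × X)) := fun p hp => (hfp p hp).1
  have hinjOn : Set.InjOn f S := by
    intro p hp p' hp' hff
    exact key p hp p' hp' (f p) (hfp p hp).2 (hff ▸ (hfp p' hp').2)
  have hfin : S.Finite := by
    refine Set.Finite.of_finite_image ?_ hinjOn
    exact t.finite_toSet.subset (Set.image_subset_iff.2 hmaps)
  refine ⟨hfin, ?_⟩
  have := Set.ncard_le_ncard_of_injOn f hmaps hinjOn t.finite_toSet
  simpa [Set.ncard_coe_finset] using this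
end

section
/- Let K̂ ⊆ R(q) be compact and suppose K̂ is closed under inverses and units, i.e., (x, y) ∈ K̂ implies (y, x) ∈ K̂, (x, x) ∈ K̂, and (y, y) ∈ K̂. Then the subgroupoid of R(q) generated by K̂, namely ⋃_{n≥1} K̂^n, is compact; moreover there exists M ∈ ℕ such that ⋃_{n≥1} K̂^n = ⋃_{n=1}^{M} K̂^n. -/
/-- Composition of relations on `X`, viewed as subsets of `X × X`. -/
def relComp {X : Type*} (S T : Set (X × X)) : Set (X × X) :=
  {p : X × X | ∃ y : X, (p.1, y) ∈ S ∧ (y, p.2) ∈ T}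

/-- `relPow S n` is the `(n+1)`-fold composition power `S^{n+1}` of the relation `S`,
so that `relPow S 0 = S¹ = S` and `relPow S n = S^{n+1}`. -/
def relPow {X : Type*} (S : Set (X × X)) : ℕ → Set (X × X)
  | 0 => S
  | n + 1 => relComp (relPow S n) S

lemma relComp_isCompact {X : Type*} [TopologicalSpace X] [T2Space X]
    {S T : Set (X × X)} (hS : IsCompact S) (hT : IsCompact T) :
    IsCompact (relComp S T) := by
  have heq : relComp S T = (fun pr : (X × X) × (X × X) => (pr.1.1, pr.2.2)) ''
      ((S ×ˢ T) ∩ {pr : (X × X) × (X × X) | pr.1.2 = pr.2.1}) := by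
    ext p
    constructor
    · rintro ⟨y, h1, h2⟩
      exact ⟨((p.1, y), (y, p.2)), ⟨⟨h1, h2⟩, rfl⟩, rfl⟩
    · rintro ⟨⟨⟨a, b⟩, ⟨c, d⟩⟩, ⟨⟨h1, h2⟩, (h3 : b = c)⟩, rfl⟩
      exact ⟨b, h1, by subst h3; exact h2⟩
  rw [heq]
  exact (((hS.prod hT).inter_right
    (isClosed_eq (by fun_prop) (by fun_prop)))).image (by fun_prop)

lemma relPow_isCompact {X : Type*} [TopologicalSpace X] [T2Space X]
    {S : Set (X × X)} (hS : IsCompact S) (n : ℕ) : IsCompact (relPow S n) := by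
  induction n with
  | zero => exact hS
  | succ n ih => exact relComp_isCompact ih hS

lemma relPow_iff_chain {X : Type*} (S : Set (X × X)) (n : ℕ) (p : X × X) :
    p ∈ relPow S n ↔ ∃ c : ℕ → X, c 0 = p.1 ∧ c (n + 1) = p.2 ∧
      ∀ i ≤ n, (c i, c (i + 1)) ∈ S := by
  induction n generalizing p with
  | zero =>
    constructor
    · intro h
      refine ⟨fun k => if k = 0 then p.1 else p.2, by simp, by simp, ?_⟩
      intro i hi
      interval_cases i
      simpa [relPow] using h
    · rintro ⟨c, h0, h1, hs⟩
      have := hs 0 le_rfl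
      rw [h0, h1] at this
      exact this
  | succ n ih =>
    constructor
    · rintro ⟨y, h1, h2⟩
      obtain ⟨c, hc0, hc1, hcs⟩ := (ih (p.1, y)).mp h1
      refine ⟨fun k => if k ≤ n + 1 then c k else p.2, by simpa using hc0, by simp, ?_⟩
      intro i hi
      rcases lt_or_eq_of_le hi with hi | hi
      · simp only [if_pos (by omega : i ≤ n + 1), if_pos (by omega : i + 1 ≤ n + 1)]
        exact hcs i (by omega)
      · subst hi
        simp only [if_pos (le_refl (n + 1)), if_neg (by omega : ¬ (n + 1 + 1 ≤ n + 1))]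
        rw [hc1]
        exact h2
    · rintro ⟨c, hc0, hc1, hcs⟩
      refine ⟨c (n + 1), (ih (p.1, c (n + 1))).mpr
        ⟨c, hc0, rfl, fun i hi => hcs i (by omega)⟩, ?_⟩
      rw [← hc1]
      exact hcs (n + 1) le_rfl

/-- Cutting out a loop from a chain. -/
lemma relPow_cut {X : Type*} (S : Set (X × X)) (n i j : ℕ) (p : X × X) (c : ℕ → X)
    (hc0 : c 0 = p.1) (hc1 : c (n + 1) = p.2) (hcs : ∀ k ≤ n, (c k, c (k + 1)) ∈ S)
    (hij : i < j) (hj : j ≤ n) (heq : c i = c j) :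
    p ∈ relPow S (n - (j - i)) := by
  rw [relPow_iff_chain]
  refine ⟨fun k => if k ≤ i then c k else c (k + (j - i)), by simpa using hc0, ?_, ?_⟩
  · simp only [if_neg (show ¬ (n - (j - i) + 1 ≤ i) by omega)]
    rw [(show n - (j - i) + 1 + (j - i) = n + 1 by omega), hc1]
  · intro k hk
    rcases lt_trichotomy k i with h | h | h
    · simp only [if_pos (show k ≤ i by omega), if_pos (show k + 1 ≤ i by omega)]
      exact hcs k (by omega)
    · subst h
      simp only [if_pos (le_refl k), if_neg (show ¬ (k + 1 ≤ k) by omega)]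
      rw [heq, (show k + 1 + (j - k) = j + 1 by omega)]
      exact hcs j hj
    · simp only [if_neg (show ¬ (k ≤ i) by omega), if_neg (show ¬ (k + 1 ≤ i) by omega)]
      rw [(show k + 1 + (j - i) = k + (j - i) + 1 by omega)]
      exact hcs (k + (j - i)) (by omega)

theorem subgroupoid_generated_by_compact_is_compact
    {X : Type*} [TopologicalSpace X] [SecondCountableTopology X]
    [LocallyCompactSpace X] [T2Space X]
    {Y : Type*} [TopologicalSpace Y]
    (q : X → Y) (hq_surj : Function.Surjective q)
    (hq_loc : ∀ x : X, ∃ U : Set X, x ∈ U ∧ IsOpen U ∧ IsOpen (q '' U) ∧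
      ∃ h : U ≃ₜ (q '' U), ∀ u : U, (h u : Y) = q u)
    (Khat : Set (X × X)) (hKhat_sub : Khat ⊆ {p : X × X | q p.1 = q p.2})
    (hKhat : IsCompact Khat)
    (hinv : ∀ p ∈ Khat, (p.2, p.1) ∈ Khat)
    (hunit : ∀ p ∈ Khat, (p.1, p.1) ∈ Khat ∧ (p.2, p.2) ∈ Khat) :
    IsCompact (⋃ n : ℕ, relPow Khat n) ∧
      ∃ M : ℕ, (⋃ n : ℕ, relPow Khat n) = ⋃ n ∈ Finset.range M, relPow Khat n := by
  classical
  -- each point has an open injectivity neighborhood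
  have hinjnbhd : ∀ x : X, ∃ U : Set X, x ∈ U ∧ IsOpen U ∧ Set.InjOn q U := by
    intro x
    obtain ⟨U, hxU, hUopen, -, h, hh⟩ := hq_loc x
    refine ⟨U, hxU, hUopen, ?_⟩
    intro a ha b hb hab
    have : h ⟨a, ha⟩ = h ⟨b, hb⟩ := by
      apply Subtype.ext
      rw [hh ⟨a, ha⟩, hh ⟨b, hb⟩]
      exact hab
    simpa [Subtype.ext_iff] using h.injective this
  choose U hxU hUopen hUinj using hinjnbhd
  -- the compact set of "legs"
  set K : Set X := Prod.fst '' Khat ∪ Prod.snd '' Khat with hK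
  have hKcomp : IsCompact K := (hKhat.image continuous_fst).union (hKhat.image continuous_snd)
  obtain ⟨t, ht⟩ := hKcomp.elim_finite_subcover U hUopen
    (fun x hx => Set.mem_iUnion.mpr ⟨x, hxU x⟩)
  set N : ℕ := t.card with hN
  -- seconds of elements of powers are units
  have hsnd : ∀ n, ∀ p ∈ relPow Khat n, (p.2, p.2) ∈ Khat := by
    intro n
    induction n with
    | zero => intro p hp; exact (hunit p hp).2
    | succ n ih =>
      rintro p ⟨y, h1, h2⟩
      exact (hunit _ h2).2
  -- monotonicity
  have hmono : ∀ n, relPow Khat n ⊆ relPow Khat (n + 1) := by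
    intro n p hp
    exact ⟨p.2, hp, hsnd n p hp⟩
  have hmono' : ∀ m n, m ≤ n → relPow Khat m ⊆ relPow Khat n := by
    intro m n hmn
    induction n with
    | zero => rw [Nat.le_zero.mp hmn]
    | succ n ih =>
      rcases Nat.lt_or_ge m (n + 1) with h | h
      · exact (ih (by omega)).trans (hmono n)
      · rw [(by omega : m = n + 1)]
  -- key stabilization: every power is contained in the N-th power
  have key : ∀ n, ∀ p ∈ relPow Khat n, ∃ m ≤ N, p ∈ relPow Khat m := by
    intro n
    induction n using Nat.strong_induction_on with
    | _ n ih =>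
      intro p hp
      by_cases hn : n ≤ N
      · exact ⟨n, hn, hp⟩
      · push_neg at hn
        obtain ⟨c, hc0, hc1, hcs⟩ := (relPow_iff_chain Khat n p).mp hp
        -- all chain points c k, k ≤ n, lie in K
        have hcK : ∀ k ≤ n, c k ∈ K := by
          intro k hk
          exact Or.inl ⟨(c k, c (k + 1)), hcs k hk, rfl⟩
        -- all chain points have the same image under q
        have hcq : ∀ k ≤ n + 1, q (c k) = q (c 0) := by
          intro k
          induction k with
          | zero => intro _; rfl
          | succ k ihk =>
            intro hk
            have h1 : q (c k) = q (c (k + 1)) := hKhat_sub (hcs k (by omega))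
            rw [← h1]
            exact ihk (by omega)
        -- pigeonhole: map each index 0..n to an element of the finite cover
        have hmem : ∀ k : Fin (n + 1), ∃ x ∈ t, c k ∈ U x := by
          intro k
          have := ht (hcK k (by omega))
          simpa using this
        choose g hg1 hg2 using hmem
        have hcard : Fintype.card { x // x ∈ t } < Fintype.card (Fin (n + 1)) := by
          simp [Fintype.card_coe]
          omega
        obtain ⟨a, b, hab, hgab⟩ := Fintype.exists_ne_map_eq_of_card_lt
          (fun k : Fin (n + 1) => (⟨g k, hg1 k⟩ : { x // x ∈ t })) hcard
        have hgab' : g a = g b := by simpa [Subtype.ext_iff] using hgab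
        have hceq : c a = c b := by
          apply hUinj (g a) (hg2 a) (hgab' ▸ hg2 b)
          rw [hcq a (by omega), hcq b (by omega)]
        -- wlog a < b, cut the loop
        have hcut : ∀ (i j : Fin (n + 1)), i < j → c i = c j →
            ∃ m < n, p ∈ relPow Khat m := by
          intro i j hij hcij
          refine ⟨n - (j - i), by omega, ?_⟩
          exact relPow_cut Khat n i j p c hc0 hc1 hcs (by exact_mod_cast hij)
            (by omega) hcij
        rcases lt_or_gt_of_ne hab with h | h
        · obtain ⟨m, hm, hpm⟩ := hcut a b h hceq
          exact ih m hm p hpm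
        · obtain ⟨m, hm, hpm⟩ := hcut b a h hceq.symm
          exact ih m hm p hpm
  -- the union equals the N-th power
  have hunion : (⋃ n : ℕ, relPow Khat n) = relPow Khat N := by
    apply Set.Subset.antisymm
    · intro p hp
      obtain ⟨s, ⟨n, rfl⟩, hps⟩ := hp
      obtain ⟨m, hm, hpm⟩ := key n p hps
      exact hmono' m N hm hpm
    · exact Set.subset_iUnion (fun n => relPow Khat n) N
  constructor
  · rw [hunion]
    exact relPow_isCompact hKhat N
  · refine ⟨N + 1, ?_⟩
    apply Set.Subset.antisymm
    · rw [hunion]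
      intro p hp
      exact Set.mem_iUnion.mpr ⟨N, Set.mem_iUnion.mpr ⟨Finset.self_mem_range_succ N, hp⟩⟩
    · intro p hp
      simp only [Set.mem_iUnion] at hp ⊢
      obtain ⟨n, _, hpn⟩ := hp
      exact ⟨n, hpn⟩
end

section
/- If Y is infinite, then g is not injective; in particular, g is not a homeomorphism. -/
open Filter Topology

variable {Y : Type*} [MetricSpace Y]

theorem not_injective_of_infinite
    {Y : Type*} [MetricSpace Y] [CompactSpace Y]
    (g : Y → Y) (hgc : Continuous g) (hgs : Function.Surjective g)
    (β γ : ℝ) (K : ℕ) (hβ : 0 < β) (hK : 1 ≤ K) (hγ0 : 0 < γ) (hγ1 : γ < 1)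
    (hax1 : ∀ x y : Y, dist x y ≤ β →
      dist (g^[K] x) (g^[K] y) ≤ γ ^ K * dist (g^[2 * K] x) (g^[2 * K] y))
    (hax2 : ∀ (x : Y) (ε : ℝ), 0 < ε → ε ≤ β →
      g^[K] '' Metric.ball (g^[K] x) ε ⊆ g^[2 * K] '' Metric.ball x (γ * ε))
    [Infinite Y] :
    ¬ Function.Injective g ∧ ∀ h : Y ≃ₜ Y, ⇑h ≠ g := by
  classical
  have main : ¬ Function.Injective g := by
    intro hginj
    -- `g` is a homeomorphism
    let G : Y ≃ₜ Y :=
      Continuous.homeoOfEquivCompactToT2 (f := Equiv.ofBijective g ⟨hginj, hgs⟩) hgc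
    set f : Y → Y := ⇑G.symm with hf
    have hfg : Function.LeftInverse g f := fun y => G.apply_symm_apply y
    have hfc : Continuous f := G.symm.continuous
    set q : Y → Y := f^[K] with hq
    -- uniform continuity of f^[2K]
    have hpc : Continuous (f^[2 * K]) := by
      induction (2 * K) with
      | zero => simpa using continuous_id
      | succ n ih => rw [Function.iterate_succ]; exact ih.comp hfc
    have hpu : UniformContinuous (f^[2 * K]) :=
      CompactSpace.uniformContinuous_of_continuous hpc
    obtain ⟨δ, hδ0, hδ⟩ := Metric.uniformContinuous_iff.mp hpu β hβ
    -- key contraction step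
    have hγK : γ ^ K ≤ γ := by
      calc γ ^ K ≤ γ ^ 1 := pow_le_pow_of_le_one hγ0.le hγ1.le hK
      _ = γ := pow_one γ
    have step : ∀ a b : Y, dist a b < δ → dist (q a) (q b) ≤ γ * dist a b := by
      intro a b hab
      have h1 := hax1 (f^[2 * K] a) (f^[2 * K] b) (le_of_lt (hδ hab))
      have e2 : ∀ c : Y, g^[2 * K] (f^[2 * K] c) = c := fun c => (hfg.iterate (2 * K)) c
      have e1 : ∀ c : Y, g^[K] (f^[2 * K] c) = q c := by
        intro c
        have : f^[2 * K] c = f^[K] (f^[K] c) := by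
          rw [two_mul, Function.iterate_add_apply]
        rw [this, (hfg.iterate K) (f^[K] c)]
      rw [e2 a, e2 b, e1 a, e1 b] at h1
      calc dist (q a) (q b) ≤ γ ^ K * dist a b := h1
      _ ≤ γ * dist a b := mul_le_mul_of_nonneg_right hγK dist_nonneg
    have iter : ∀ (n : ℕ) (a b : Y), dist a b < δ →
        dist (q^[n] a) (q^[n] b) ≤ γ ^ n * dist a b := by
      intro n
      induction n with
      | zero => intro a b _; simp
      | succ n ih =>
        intro a b hab
        have h1 : dist (q a) (q b) ≤ γ * dist a b := step a b hab
        have h2 : dist (q a) (q b) < δ := by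
          have : γ * dist a b ≤ 1 * dist a b :=
            mul_le_mul_of_nonneg_right hγ1.le dist_nonneg
          calc dist (q a) (q b) ≤ γ * dist a b := h1
          _ ≤ 1 * dist a b := this
          _ = dist a b := one_mul _
          _ < δ := hab
        calc dist (q^[n+1] a) (q^[n+1] b) = dist (q^[n] (q a)) (q^[n] (q b)) := by
              rw [Function.iterate_succ_apply, Function.iterate_succ_apply]
        _ ≤ γ ^ n * dist (q a) (q b) := ih (q a) (q b) h2
        _ ≤ γ ^ n * (γ * dist a b) :=
              mul_le_mul_of_nonneg_left h1 (pow_nonneg hγ0.le n)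
        _ = γ ^ (n + 1) * dist a b := by ring
    -- finite cover by δ/3 balls
    obtain ⟨t, -, htfin, htcov⟩ :=
      finite_cover_balls_of_compact (isCompact_univ (X := Y)) (by positivity : (0:ℝ) < δ/3)
    set T : Finset Y := htfin.toFinset with hT
    have hTmem : ∀ y : Y, ∃ c ∈ T, dist y c < δ/3 := by
      intro y
      have := htcov (Set.mem_univ y)
      simp only [Set.mem_iUnion, Metric.mem_ball] at this
      obtain ⟨c, hc, hyc⟩ := this
      exact ⟨c, htfin.mem_toFinset.mpr hc, hyc⟩
    -- many distinct points
    obtain ⟨s, hscard⟩ := Infinite.exists_subset_card_eq Y (T.card + 1)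
    -- minimal distance among distinct points of s
    have hT1 : 1 ≤ T.card := by
      obtain ⟨y⟩ := (inferInstance : Nonempty Y)
      obtain ⟨c, hc, -⟩ := hTmem y
      exact Finset.card_pos.mpr ⟨c, hc⟩
    have hod : s.offDiag.Nonempty := by
      obtain ⟨a, ha, b, hb, hab⟩ := Finset.one_lt_card.mp (by omega : 1 < s.card)
      exact ⟨(a, b), Finset.mem_offDiag.mpr ⟨ha, hb, hab⟩⟩
    set D : Finset ℝ := s.offDiag.image fun p => dist p.1 p.2 with hD
    have hDne : D.Nonempty := hod.image _
    set m : ℝ := D.min' hDne with hm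
    have hm0 : 0 < m := by
      have := D.min'_mem hDne
      rw [← hm] at this
      simp only [hD, Finset.mem_image] at this
      obtain ⟨p, hp, hpe⟩ := this
      rw [Finset.mem_offDiag] at hp
      rw [← hpe]
      exact dist_pos.mpr hp.2.2
    -- choose n with 2 * γ^n * δ < m
    obtain ⟨n, hn⟩ := exists_pow_lt_of_lt_one (show (0:ℝ) < m / (2 * δ) by positivity) hγ1
    have hnd : γ ^ n * δ < m / 2 := by
      have h1 : γ ^ n * δ < (m / (2 * δ)) * δ := mul_lt_mul_of_pos_right hn hδ0
      have h2 : (m / (2 * δ)) * δ = m / 2 := by field_simp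
      linarith
    -- each point is close to q^[n] of some center
    have hqsurj : Function.Surjective (q^[n]) :=
      ((G.symm.surjective).iterate K).iterate n
    have claim : ∀ y : Y, ∃ c ∈ T, dist y (q^[n] c) ≤ γ ^ n * δ := by
      intro y
      obtain ⟨z, hz⟩ := hqsurj y
      obtain ⟨c, hc, hzc⟩ := hTmem z
      refine ⟨c, hc, ?_⟩
      have h1 : dist z c < δ := by linarith
      calc dist y (q^[n] c) = dist (q^[n] z) (q^[n] c) := by rw [hz]
      _ ≤ γ ^ n * dist z c := iter n z c h1
      _ ≤ γ ^ n * δ := mul_le_mul_of_nonneg_left h1.le (pow_nonneg hγ0.le n)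
    -- pigeonhole
    have hcard : T.card < s.card := by omega
    obtain ⟨x, hx, y, hy, hxy, hFxy⟩ :=
      Finset.exists_ne_map_eq_of_card_lt_of_maps_to hcard
        (fun a (_ : a ∈ s) => (claim a).choose_spec.1)
    have hdx := (claim x).choose_spec.2
    have hdy := (claim y).choose_spec.2
    rw [hFxy] at hdx
    have hxym : dist x y < m := by
      calc dist x y ≤ dist x (q^[n] (claim y).choose) + dist y (q^[n] (claim y).choose) := by
            rw [dist_comm y _]; exact dist_triangle _ _ _
      _ ≤ γ ^ n * δ + γ ^ n * δ := add_le_add hdx hdy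
      _ < m := by linarith
    have hxym' : m ≤ dist x y := by
      apply D.min'_le
      simp only [hD, Finset.mem_image]
      exact ⟨(x, y), Finset.mem_offDiag.mpr ⟨hx, hy, hxy⟩, rfl⟩
    linarith
  exact ⟨main, fun h hh => main (hh ▸ h.injective)⟩
end
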